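/- Suppose q_m ∈ (0,1). Define x_1 = (q_m^{−1/(m−1)} − 1)/(q_m^{−1/(m−1)} − q_m), μ = (1−q_m)/(1−x_1), and x_i = q_m x_1 (1 + μ x_1)^{m−i} for 1 ≤ i ≤ m. Then x = (x_1,…,x_m) is a stationary solution of the density-dependent model: all x_i ≥ 0, Σ_{i=1}^m x_i = 1, x_1 < 1, and the stationarity equations hold; moreover x_1 satisfies 1 = q_m (1 + (1−q_m)x_1/(1−x_1))^{m−1}. -/

import Mathlib

/-- A stationary solution of the density-dependent imitation model
(1-indexed: the vector is `x 1, …, x m`): nonnegative entries summing to `1`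
with `x 1 < 1`, satisfying, with `μ = (1−q_m)/(1−x 1)`, the stationarity
equations `x m = a x m + (1−a) q_m x 1` and, for `1 ≤ i ≤ m−1`,
`x i = (1−a) x (i+1) + a x i + (1−a) μ x (i+1) x 1`. -/
def IsStationaryDD (m : ℕ) (a qm : ℝ) (x : ℕ → ℝ) : Prop :=
  (∀ i, 1 ≤ i → i ≤ m → 0 ≤ x i) ∧
  (∑ i ∈ Finset.Icc 1 m, x i = 1) ∧
  x 1 < 1 ∧
  x m = a * x m + (1 - a) * qm * x 1 ∧
  ∀ i, 1 ≤ i → i ≤ m - 1 →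
    x i = (1 - a) * x (i + 1) + a * x i +
      (1 - a) * ((1 - qm) / (1 - x 1)) * x (i + 1) * x 1

/-- For `q_m ∈ (0,1)`, the explicit truncated power law
`x_i = q_m x₁ (1 + μ x₁)^{m−i}` with
`x₁ = (q_m^{−1/(m−1)} − 1)/(q_m^{−1/(m−1)} − q_m)` and `μ = (1−q_m)/(1−x₁)`
is a stationary solution of the density-dependent model, and `x₁` satisfies
`1 = q_m (1 + (1−q_m)x₁/(1−x₁))^{m−1}`. -/
theorem stmt8 (m : ℕ) (hm : 2 ≤ m) (a : ℝ) (ha : a ∈ Set.Ioo (0 : ℝ) 1)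
    (qm : ℝ) (hqm : qm ∈ Set.Ioo (0 : ℝ) 1)
    (x₁ μ : ℝ)
    (hx₁ : x₁ = (qm ^ (-(1 : ℝ) / ((m : ℝ) - 1)) - 1) /
      (qm ^ (-(1 : ℝ) / ((m : ℝ) - 1)) - qm))
    (hμ : μ = (1 - qm) / (1 - x₁)) :
    IsStationaryDD m a qm (fun i => qm * x₁ * (1 + μ * x₁) ^ (m - i)) ∧
      1 = qm * (1 + (1 - qm) * x₁ / (1 - x₁)) ^ (m - 1) := by
  obtain ⟨hqm0, hqm1⟩ := hqm
  obtain ⟨ha0, ha1⟩ := ha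
  set r : ℝ := qm ^ (-(1 : ℝ) / ((m : ℝ) - 1)) with hrdef
  have hm2 : (2 : ℝ) ≤ (m : ℝ) := by exact_mod_cast hm
  have hmpos : (0 : ℝ) < (m : ℝ) - 1 := by linarith
  have hrpos : 0 < r := Real.rpow_pos_of_pos hqm0 _
  have hr1 : 1 < r := by
    rw [hrdef, Real.one_lt_rpow_iff_of_pos hqm0]
    right
    exact ⟨hqm1, div_neg_of_neg_of_pos (by norm_num) hmpos⟩
  have hcast : ((m - 1 : ℕ) : ℝ) = (m : ℝ) - 1 := by
    have h1 : 1 ≤ m := by omega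
    push_cast [Nat.cast_sub h1]; ring
  have key : r ^ (m - 1) = qm⁻¹ := by
    rw [← Real.rpow_natCast r (m - 1), hrdef, ← Real.rpow_mul hqm0.le, hcast]
    rw [show -(1 : ℝ) / ((m : ℝ) - 1) * ((m : ℝ) - 1) = -1 by
      field_simp]
    exact Real.rpow_neg_one qm
  have hrm : qm * r ^ (m - 1) = 1 := by
    rw [key]; field_simp
  have hrq : qm < r := lt_trans hqm1 hr1
  have hrq0 : (0 : ℝ) < r - qm := by linarith
  have hx1' : x₁ = (r - 1) / (r - qm) := hx₁
  have hne : (1 : ℝ) - qm ≠ 0 := by linarith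
  have hx1nonneg : 0 ≤ x₁ := by
    rw [hx1']; apply div_nonneg <;> linarith
  have hx1lt : x₁ < 1 := by
    rw [hx1', div_lt_one hrq0]; linarith
  have h1x : 1 - x₁ = (1 - qm) / (r - qm) := by
    rw [hx1']; field_simp; ring
  have hμv : μ = r - qm := by
    rw [hμ, h1x, div_div_eq_mul_div, mul_comm, mul_div_assoc, div_self hne, mul_one]
  have hreq : r = 1 + μ * x₁ := by
    rw [hμv, hx1']
    field_simp
    ring
  have hrpowm : r ^ m = r ^ (m - 1) * r := by
    rw [← pow_succ]; congr 1; omega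
  have hqrm : qm * r ^ m = r := by
    rw [hrpowm, ← mul_assoc, hrm, one_mul]
  refine ⟨⟨?_, ?_, ?_, ?_, ?_⟩, ?_⟩
  · intro i _ _
    simp only
    rw [← hreq]
    positivity
  · simp only [← hreq]
    rw [← Finset.mul_sum]
    have h1 : ∑ i ∈ Finset.Icc 1 m, r ^ (m - i) = ∑ j ∈ Finset.range m, r ^ (m - 1 - j) := by
      rw [← Finset.Ico_add_one_right_eq_Icc, Finset.sum_Ico_eq_sum_range]
      apply Finset.sum_congr (by congr 1)
      intro j _
      congr 1; omega
    have hne1 : r - 1 ≠ 0 := by linarith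
    have hne2 : r - qm ≠ 0 := ne_of_gt hrq0
    rw [h1, Finset.sum_range_reflect (fun j => r ^ j) m, geom_sum_eq (ne_of_gt hr1), hx1']
    field_simp
    linear_combination hqrm
  · simp only
    rw [← hreq]
    calc qm * x₁ * r ^ (m - 1) = x₁ * (qm * r ^ (m - 1)) := by ring
    _ = x₁ := by rw [hrm, mul_one]
    _ < 1 := hx1lt
  · simp only [Nat.sub_self, pow_zero, mul_one, ← hreq]
    linear_combination (-(1 - a) * qm * x₁) * hrm
  · intro i hi1 hi2
    have hx1e : qm * x₁ * r ^ (m - 1) = x₁ := by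
      rw [mul_comm qm x₁, mul_assoc, hrm, mul_one]
    simp only [← hreq]
    rw [hx1e, ← hμ]
    have hk : m - i = (m - (i + 1)) + 1 := by omega
    rw [hk, pow_succ]
    linear_combination ((1 - a) * qm * x₁ * r ^ (m - (i + 1))) * hreq
  · have heq : (1 - qm) * x₁ / (1 - x₁) = μ * x₁ := by
      rw [hμ]; ring
    rw [heq, ← hreq]
    exact hrm.symm
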